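/- Hafnian expansion along a row: for a symmetric 2n×2n matrix A over a commutative ring with zero diagonal (n ≥ 1), and any fixed index i, hf(A) = Σ_{j ≠ i} a_{ij} · hf(A[i,j]), where A[i,j] is A with rows and columns i and j deleted. -/

import Mathlib

/-- The hafnian of a square matrix: the sum over all perfect matchings of the index
set (encoded as fixed-point-free involutions `σ`) of the product of the entries
`A i (σ i)` over the edges `{i, σ i}` of the matching (taking `i < σ i`). -/
def Matrix.hafnian {m : ℕ} {R : Type*} [CommRing R] (A : Matrix (Fin m) (Fin m) R) : R :=
  ∑ σ ∈ Finset.univ.filter (fun σ : Equiv.Perm (Fin m) => σ * σ = 1 ∧ ∀ i, σ i ≠ i),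
    ∏ i ∈ Finset.univ.filter (fun i => i < σ i), A i (σ i)

/-- The principal submatrix of `A` obtained by deleting the rows and columns indexed
by `s` (remaining indices kept in increasing order); junk value if the cardinality
does not match. -/
def Matrix.delPrincipal {m k : ℕ} {R : Type*} [CommRing R] (A : Matrix (Fin m) (Fin m) R)
    (s : Finset (Fin m)) : Matrix (Fin k) (Fin k) R :=
  if h : sᶜ.card = k then
    A.submatrix (fun a => (sᶜ.orderIsoOfFin h a : Fin m))
      (fun b => (sᶜ.orderIsoOfFin h b : Fin m))
  else 0

open Finset Equiv

lemma hafnian_fiber {n : ℕ} {R : Type*} [CommRing R]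
    (A : Matrix (Fin (2 * n + 2)) (Fin (2 * n + 2)) R) (hsymm : A.IsSymm)
    (i j : Fin (2 * n + 2)) (hij : i ≠ j) :
    ∑ σ ∈ Finset.univ.filter (fun σ : Equiv.Perm (Fin (2 * n + 2)) =>
        (σ * σ = 1 ∧ ∀ x, σ x ≠ x) ∧ σ i = j),
      ∏ x ∈ Finset.univ.filter (fun x => x < σ x), A x (σ x)
    = A i j * (Matrix.delPrincipal (k := 2 * n) A {i, j}).hafnian := by
  classical
  set s : Finset (Fin (2 * n + 2)) := {i, j} with hs
  have hcards : s.card = 2 := by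
    rw [hs, Finset.card_insert_of_notMem (by simpa using hij), Finset.card_singleton]
  have hcard : sᶜ.card = 2 * n := by
    rw [Finset.card_compl, hcards]
    simp
  set e := sᶜ.orderIsoOfFin hcard with he
  set E : Fin (2 * n) → Fin (2 * n + 2) := fun a => (e a : Fin (2 * n + 2)) with hE
  have hEmem : ∀ a, E a ∈ sᶜ := fun a => (e a).2
  have hEi : ∀ a, E a ≠ i := by
    intro a hEa
    have := hEmem a
    rw [Finset.mem_compl, hs] at this
    exact this (by simp [hEa])
  have hEj : ∀ a, E a ≠ j := by
    intro a hEa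
    have := hEmem a
    rw [Finset.mem_compl, hs] at this
    exact this (by simp [hEa])
  have hEmono : StrictMono E := fun a b hab => by
    exact_mod_cast e.strictMono hab
  have hEinj : Function.Injective E := hEmono.injective
  have hEsurj : ∀ x ∈ sᶜ, ∃ a, E a = x := by
    intro x hx
    exact ⟨e.symm ⟨x, hx⟩, by simp [hE]⟩
  have hiins : i ∉ sᶜ := by simp [hs]
  have hjins : j ∉ sᶜ := by simp [hs]
  set f : Fin (2 * n) ≃ {x // x ∈ sᶜ} := e.toEquiv with hf
  set Φ : Equiv.Perm (Fin (2 * n)) → Equiv.Perm (Fin (2 * n + 2)) :=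
    fun τ => Equiv.swap i j * τ.extendDomain f with hΦ
  -- pointwise behavior of Φ
  have hΦi : ∀ τ, Φ τ i = j := by
    intro τ
    show Equiv.swap i j (τ.extendDomain f i) = j
    rw [Equiv.Perm.extendDomain_apply_not_subtype _ _ hiins, Equiv.swap_apply_left]
  have hΦj : ∀ τ, Φ τ j = i := by
    intro τ
    show Equiv.swap i j (τ.extendDomain f j) = i
    rw [Equiv.Perm.extendDomain_apply_not_subtype _ _ hjins, Equiv.swap_apply_right]
  have hΦE : ∀ τ a, Φ τ (E a) = E (τ a) := by
    intro τ a
    show Equiv.swap i j (τ.extendDomain f (E a)) = E (τ a)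
    have h1 : τ.extendDomain f (E a) = E (τ a) := Equiv.Perm.extendDomain_apply_image τ f a
    rw [h1, Equiv.swap_apply_of_ne_of_ne (hEi _) (hEj _)]
  -- trichotomy
  have htri : ∀ x : Fin (2 * n + 2), x = i ∨ x = j ∨ ∃ a, E a = x := by
    intro x
    by_cases hx : x ∈ sᶜ
    · exact Or.inr (Or.inr (hEsurj x hx))
    · rw [Finset.mem_compl, not_not, hs] at hx
      simp only [Finset.mem_insert, Finset.mem_singleton] at hx
      exact hx.imp id Or.inl
  -- the inverse map
  set Ψ : Equiv.Perm (Fin (2 * n + 2)) → Equiv.Perm (Fin (2 * n)) :=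
    fun σ => if h : ∀ x, x ∈ sᶜ ↔ σ x ∈ sᶜ then
      (f.symm.permCongr (σ.subtypePerm (fun x => (h x).symm))) else 1 with hΨ
  have hΨkey : ∀ (σ : Equiv.Perm (Fin (2 * n + 2))) (h : ∀ x, x ∈ sᶜ ↔ σ x ∈ sᶜ) (a : Fin (2 * n)),
      E (Ψ σ a) = σ (E a) := by
    intro σ h a
    rw [hΨ]
    simp only [dif_pos h]
    rw [Equiv.permCongr_apply]
    simp [hE, hf, Equiv.Perm.subtypePerm_apply]
  -- membership of Φ τ
  have hΦmem : ∀ τ : Equiv.Perm (Fin (2 * n)),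
      (τ * τ = 1 ∧ ∀ a, τ a ≠ a) → ((Φ τ * Φ τ = 1 ∧ ∀ x, Φ τ x ≠ x) ∧ Φ τ i = j) := by
    intro τ ⟨hτ1, hτf⟩
    have hτinv : ∀ a, τ (τ a) = a := fun a => by
      have := Equiv.ext_iff.mp hτ1 a
      simpa using this
    refine ⟨⟨?_, ?_⟩, hΦi τ⟩
    · ext x
      simp only [Equiv.Perm.mul_apply, Equiv.Perm.one_apply]
      rcases htri x with rfl | rfl | ⟨a, rfl⟩
      · rw [hΦi, hΦj]
      · rw [hΦj, hΦi]
      · rw [hΦE, hΦE, hτinv]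
    · intro x hx
      rcases htri x with rfl | rfl | ⟨a, rfl⟩
      · rw [hΦi] at hx; exact hij hx.symm
      · rw [hΦj] at hx; exact hij hx
      · rw [hΦE] at hx; exact hτf a (hEinj hx)
  -- maps-to property needed for Ψ
  have hmaps : ∀ σ : Equiv.Perm (Fin (2 * n + 2)),
      ((σ * σ = 1 ∧ ∀ x, σ x ≠ x) ∧ σ i = j) → ∀ x, x ∈ sᶜ ↔ σ x ∈ sᶜ := by
    intro σ ⟨⟨hσ1, hσf⟩, hσi⟩ x
    have hσinv : ∀ y, σ (σ y) = y := fun y => by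
      have := Equiv.ext_iff.mp hσ1 y
      simpa using this
    have hσj : σ j = i := by rw [← hσi, hσinv]
    constructor
    · intro hx
      rw [Finset.mem_compl, hs] at hx ⊢
      simp only [Finset.mem_insert, Finset.mem_singleton] at hx ⊢
      push_neg at hx ⊢
      refine ⟨fun h => ?_, fun h => ?_⟩
      · exact hx.2 (by rw [← hσinv x, h, hσi])
      · exact hx.1 (by rw [← hσinv x, h, hσj])
    · intro hx
      rw [Finset.mem_compl, hs] at hx ⊢
      simp only [Finset.mem_insert, Finset.mem_singleton] at hx ⊢
      push_neg at hx ⊢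
      exact ⟨fun h => hx.2 (by rw [h, hσi]), fun h => hx.1 (by rw [h, hσj])⟩
  -- main computation
  rw [Matrix.hafnian, Finset.mul_sum]
  refine Finset.sum_nbij' Ψ Φ ?_ ?_ ?_ ?_ ?_
  · -- Ψ maps into τ-set
    intro σ hσ
    rw [Finset.mem_filter] at hσ ⊢
    obtain ⟨-, hσp⟩ := hσ
    have h := hmaps σ hσp
    obtain ⟨⟨hσ1, hσf⟩, hσi⟩ := hσp
    have hσinv : ∀ y, σ (σ y) = y := fun y => by
      have := Equiv.ext_iff.mp hσ1 y
      simpa using this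
    have hkey2 : ∀ a, (Ψ σ) ((Ψ σ) a) = a := fun a =>
      hEinj (by rw [hΨkey σ h, hΨkey σ h, hσinv])
    refine ⟨Finset.mem_univ _, ?_, ?_⟩
    · ext a
      simp only [Equiv.Perm.mul_apply, Equiv.Perm.one_apply, hkey2 a]
    · intro a ha
      have : σ (E a) = E a := by rw [← hΨkey σ h, ha]
      exact hσf (E a) this
  · -- Φ maps into σ-set
    intro τ hτ
    rw [Finset.mem_filter] at hτ ⊢
    exact ⟨Finset.mem_univ _, hΦmem τ hτ.2⟩
  · -- Φ (Ψ σ) = σ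
    intro σ hσ
    rw [Finset.mem_filter] at hσ
    obtain ⟨-, hσp⟩ := hσ
    have h := hmaps σ hσp
    obtain ⟨⟨hσ1, hσf⟩, hσi⟩ := hσp
    have hσinv : ∀ y, σ (σ y) = y := fun y => by
      have := Equiv.ext_iff.mp hσ1 y
      simpa using this
    have hσj : σ j = i := by rw [← hσi, hσinv]
    have hkey2 : ∀ x, Φ (Ψ σ) x = σ x := by
      intro x
      rcases htri x with hx1 | hx1 | ⟨a, hx1⟩
      · rw [hx1, hΦi, hσi]
      · rw [hx1, hΦj, hσj]
      · rw [← hx1, hΦE, hΨkey σ h]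
    ext x
    simp only [hkey2 x]
  · -- Ψ (Φ τ) = τ
    intro τ hτ
    rw [Finset.mem_filter] at hτ
    have hΦm := hΦmem τ hτ.2
    have h := hmaps (Φ τ) hΦm
    have hkey2 : ∀ a, Ψ (Φ τ) a = τ a := fun a => hEinj (by rw [hΨkey (Φ τ) h, hΦE])
    ext a
    simp only [hkey2 a]
  · -- products agree
    intro σ hσ
    rw [Finset.mem_filter] at hσ
    obtain ⟨-, hσp⟩ := hσ
    have h := hmaps σ hσp
    obtain ⟨⟨hσ1, hσf⟩, hσi⟩ := hσp
    have hσinv : ∀ y, σ (σ y) = y := fun y => by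
      have := Equiv.ext_iff.mp hσ1 y
      simpa using this
    have hσj : σ j = i := by rw [← hσi, hσinv]
    set τ := Ψ σ with hτdef
    have hτE : ∀ a, E (τ a) = σ (E a) := hΨkey σ h
    have hB : ∀ a b : Fin (2 * n),
        (Matrix.delPrincipal (k := 2 * n) A s) a b = A (E a) (E b) := by
      intro a b
      rw [Matrix.delPrincipal, dif_pos hcard]
      rfl
    -- the filter set splits
    have hsplit : ∀ u v : Fin (2 * n + 2), u < v → σ u = v → σ v = u → u ∈ s →
        (Finset.univ.filter (fun x => x < σ x)) =
          insert u ((Finset.univ.filter (fun a => a < τ a)).image E) := by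
      intro u v huv hσu hσv hus
      ext x
      simp only [Finset.mem_filter, Finset.mem_univ, true_and, Finset.mem_insert,
        Finset.mem_image]
      constructor
      · intro hx
        rcases htri x with hx1 | hx1 | ⟨a, hx1⟩
        · by_cases hui : u = i
          · exact Or.inl (hx1.trans hui.symm)
          · have hvi : v = i := by
              have huj : u = j := by
                rw [hs] at hus
                simp only [Finset.mem_insert, Finset.mem_singleton] at hus
                tauto
              rw [huj, hσj] at hσu
              exact hσu.symm
            exfalso
            rw [hx1, ← hvi, hσv] at hx
            exact absurd hx (not_lt.mpr huv.le)
        · by_cases huj : u = j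
          · exact Or.inl (hx1.trans huj.symm)
          · have hvj : v = j := by
              have hui : u = i := by
                rw [hs] at hus
                simp only [Finset.mem_insert, Finset.mem_singleton] at hus
                tauto
              rw [hui, hσi] at hσu
              exact hσu.symm
            exfalso
            rw [hx1, ← hvj, hσv] at hx
            exact absurd hx (not_lt.mpr huv.le)
        · right
          refine ⟨a, ?_, hx1⟩
          rw [← hx1, ← hτE] at hx
          exact hEmono.lt_iff_lt.mp hx
      · intro hx
        rcases hx with hx1 | ⟨a, ha, hx1⟩
        · rw [hx1, hσu]; exact huv
        · rw [← hx1, ← hτE]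
          exact hEmono ha
    have hunotmem : ∀ u, u ∈ s → u ∉ (Finset.univ.filter (fun a => a < τ a)).image E := by
      intro u hus hmem
      rw [Finset.mem_image] at hmem
      obtain ⟨a, -, ha⟩ := hmem
      have := hEmem a
      rw [ha, Finset.mem_compl] at this
      exact this hus
    have hprodtail :
        ∏ x ∈ (Finset.univ.filter (fun a => a < τ a)).image E, A x (σ x)
          = ∏ a ∈ Finset.univ.filter (fun a => a < τ a),
              (Matrix.delPrincipal (k := 2 * n) A s) a (τ a) := by
      rw [Finset.prod_image (fun a _ b _ hab => hEinj hab)]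
      refine Finset.prod_congr rfl fun a _ => ?_
      rw [← hτE, hB]
    rcases lt_or_gt_of_ne hij with hlt | hlt
    · rw [hsplit i j hlt hσi hσj (by rw [hs]; simp)]
      rw [Finset.prod_insert (hunotmem i (by rw [hs]; simp)), hσi, hprodtail]
    · rw [hsplit j i hlt hσj hσi (by rw [hs]; simp)]
      rw [Finset.prod_insert (hunotmem j (by rw [hs]; simp)), hσj, hprodtail, hsymm.apply]

/-- Hafnian expansion along a row: for a symmetric `2n × 2n` matrix `A` (`n ≥ 1`)
with zero diagonal over a commutative ring and any fixed index `i`,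
`hf(A) = Σ_{j ≠ i} a_{ij} · hf(A[i,j])`, where `A[i,j]` deletes rows and columns
`i` and `j`. -/
theorem hafnian_expand_row {n : ℕ} {R : Type*} [CommRing R]
    (A : Matrix (Fin (2 * n + 2)) (Fin (2 * n + 2)) R)
    (hsymm : A.IsSymm) (hdiag : ∀ i, A i i = 0) (i : Fin (2 * n + 2)) :
    A.hafnian = ∑ j ∈ Finset.univ \ {i},
      A i j * (Matrix.delPrincipal (k := 2 * n) A {i, j}).hafnian := by
  classical
  rw [Matrix.hafnian]
  rw [← Finset.sum_fiberwise_of_maps_to (g := fun σ : Equiv.Perm (Fin (2 * n + 2)) => σ i)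
    (t := Finset.univ \ {i}) (fun σ hσ => by
      rw [Finset.mem_filter] at hσ
      simp [hσ.2.2 i])]
  refine Finset.sum_congr rfl fun j hj => ?_
  have hij : i ≠ j := by
    rw [Finset.mem_sdiff, Finset.mem_singleton] at hj
    exact fun h => hj.2 h.symm
  rw [← hafnian_fiber A hsymm i j hij]
  rw [Finset.filter_filter]
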